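/- The 3-prism graph has no stable cut, yet it has a NAC-coloring; hence existence of a stable cut is strictly stronger than existence of a NAC-coloring. -/

import Mathlib

open SimpleGraph

def IsNACColoring {V : Type*} (G : SimpleGraph V) (δ : Sym2 V → Bool) : Prop :=
  (∃ e ∈ G.edgeSet, δ e = true) ∧ (∃ e ∈ G.edgeSet, δ e = false) ∧
  ∀ ⦃u : V⦄ (w : G.Walk u u), w.IsCycle →
    ∀ b : Bool, (w.edges.countP fun e => δ e == b) ≠ 1

/-- The 3-prism graph: two triangles 012 and 345 joined by the matching 03, 14, 25. -/
def prism : SimpleGraph (Fin 6) :=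
  SimpleGraph.fromEdgeSet
    {s(0, 1), s(1, 2), s(0, 2), s(3, 4), s(4, 5), s(3, 5), s(0, 3), s(1, 4), s(2, 5)}

/-- The coloring of the 3-prism with both triangles colored `true` and the
matching edges colored `false`. -/
def prismColoring : Sym2 (Fin 6) → Bool := fun e =>
  decide (e ∈ ({s(0, 1), s(1, 2), s(0, 2), s(3, 4), s(4, 5), s(3, 5)} :
    Finset (Sym2 (Fin 6))))

instance : DecidableRel prism.Adj := fun u v =>
  decidable_of_iff (s(u,v) ∈ ({s(0, 1), s(1, 2), s(0, 2), s(3, 4), s(4, 5), s(3, 5),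
      s(0, 3), s(1, 4), s(2, 5)} : Finset (Sym2 (Fin 6))) ∧ u ≠ v) (by
    simp [prism, SimpleGraph.fromEdgeSet_adj])

/-- Auxiliary graph: the prism restricted away from the `f`-marked vertices. -/
def Gf (f : Fin 6 → Bool) : SimpleGraph (Fin 6) where
  Adj u v := prism.Adj u v ∧ ¬ f u ∧ ¬ f v
  symm.symm u v := by intro ⟨h, h1, h2⟩; exact ⟨h.symm, h2, h1⟩
  loopless.irrefl u := by intro ⟨h, _⟩; exact prism.loopless.irrefl u h

instance (f : Fin 6 → Bool) : DecidableRel (Gf f).Adj := fun u v => by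
  unfold Gf; infer_instance

set_option maxRecDepth 10000 in
theorem prism_key1 : ∀ f : Fin 6 → Bool, (∀ u v, f u → f v → ¬ prism.Adj u v) →
    ∀ u v : Fin 6, f u = false → f v = false → (Gf f).Reachable u v := by decide

theorem prism_transfer {f : Fin 6 → Bool} {S : Set (Fin 6)}
    (hfS : ∀ x, f x = false ↔ x ∈ Sᶜ) :
    ∀ {a b : Fin 6} (ha : a ∈ Sᶜ) (hb : b ∈ Sᶜ), (Gf f).Walk a b →
      (prism.induce Sᶜ).Reachable ⟨a, ha⟩ ⟨b, hb⟩ := by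
  intro a b ha hb w
  induction w with
  | nil => exact Reachable.refl _
  | @cons a c b h p ih =>
    obtain ⟨hadj, hfa, hfc⟩ := h
    have hc : c ∈ Sᶜ := (hfS c).mp (by simpa using hfc)
    have : (prism.induce Sᶜ).Adj ⟨a, ha⟩ ⟨c, hc⟩ := by
      simp [comap_adj, hadj]
    exact this.reachable.trans (ih hc hb)

/-- side of a vertex: `true` for the first triangle. -/
def pside (x : Fin 6) : Bool := decide (x.val < 3)

/-- position within the triangle. -/
def ppos (x : Fin 6) : ℕ := x.val % 3

lemma prism_edge_false_iff : ∀ a b : Fin 6, prism.Adj a b →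
    ((prismColoring s(a,b) = false) ↔ pside a ≠ pside b) := by decide

lemma prism_edge_true_iff : ∀ a b : Fin 6, prism.Adj a b →
    ((prismColoring s(a,b) = true) ↔ ppos a ≠ ppos b) := by decide

lemma prism_parity_false {u v : Fin 6} (w : prism.Walk u v) :
    (w.edges.countP fun e => prismColoring e == false) % 2 = 0 ↔ pside u = pside v := by
  induction w with
  | nil => simp
  | @cons a c b h p ih =>
    rw [Walk.edges_cons, List.countP_cons]
    by_cases hf : prismColoring s(a, c) = false
    · have hs : pside a ≠ pside c := (prism_edge_false_iff a c h).mp hf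
      simp only [hf, beq_self_eq_true, if_pos]
      constructor
      · intro hmod
        have : ¬ ((p.edges.countP fun e => prismColoring e == false) % 2 = 0) := by omega
        have := (not_iff_not.mpr ih).mp this
        revert hs this; cases pside a <;> cases pside c <;> cases pside b <;> simp
      · intro hab
        have : pside c ≠ pside b := by
          revert hs hab; cases pside a <;> cases pside c <;> cases pside b <;> simp
        have := (not_iff_not.mpr ih).mpr this
        omega
    · have hs : pside a = pside c := by
        have := (not_iff_not.mpr (prism_edge_false_iff a c h)).mp hf
        simpa using this
      have hne : (prismColoring s(a,c) == false) = false := by simp [hf]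
      rw [hne]
      simpa [hs] using ih

lemma prism_count_true {u v : Fin 6} (w : prism.Walk u v) :
    ((w.edges.countP fun e => prismColoring e == true) = 0 → ppos u = ppos v) ∧
    ((w.edges.countP fun e => prismColoring e == true) = 1 → ppos u ≠ ppos v) := by
  induction w with
  | nil => simp
  | @cons a c b h p ih =>
    rw [Walk.edges_cons, List.countP_cons]
    by_cases ht : prismColoring s(a, c) = true
    · have hp : ppos a ≠ ppos c := (prism_edge_true_iff a c h).mp ht
      simp only [ht, beq_self_eq_true, if_pos]
      constructor
      · omega
      · intro h1
        have : (p.edges.countP fun e => prismColoring e == true) = 0 := by omega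
        have := ih.1 this
        omega
    · have hp : ppos a = ppos c := by
        have := (not_iff_not.mpr (prism_edge_true_iff a c h)).mp ht
        simpa using this
      have hne : (prismColoring s(a,c) == true) = false := by simp [ht]
      rw [hne]
      simpa [hp] using ih

/-- the 3-prism has no stable cut, yet it has a NAC-coloring. -/
theorem prism_no_stableCut_but_NAC :
    (¬ ∃ S : Set (Fin 6),
        (∀ u ∈ S, ∀ v ∈ S, ¬ prism.Adj u v) ∧
          ∃ u v : ↥(Sᶜ), ¬ (prism.induce Sᶜ).Reachable u v) ∧
      ∃ δ : Sym2 (Fin 6) → Bool, IsNACColoring prism δ := by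
  constructor
  · rintro ⟨S, hind, u, v, hnr⟩
    classical
    set f : Fin 6 → Bool := fun x => decide (x ∈ S) with hf
    have hfS : ∀ x, f x = false ↔ x ∈ Sᶜ := by
      intro x
      simp [hf, Set.mem_compl_iff]
    have hind' : ∀ a b, f a → f b → ¬ prism.Adj a b := by
      intro a b ha hb
      exact hind a (by simpa [hf] using ha) b (by simpa [hf] using hb)
    have hr := prism_key1 f hind' u v ((hfS u).mpr u.2) ((hfS v).mpr v.2)
    obtain ⟨w⟩ := hr
    exact hnr (by simpa using prism_transfer hfS u.2 v.2 w)
  · refine ⟨prismColoring, ⟨s(0,1), ?_, by decide⟩, ⟨s(0,3), ?_, by decide⟩, ?_⟩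
    · rw [mem_edgeSet]; decide
    · rw [mem_edgeSet]; decide
    · intro u w _ b
      cases b with
      | false =>
        intro h1
        have := (prism_parity_false w).mpr rfl
        omega
      | true =>
        intro h1
        exact (prism_count_true w).2 h1 rfl
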